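/- Let h : ℝ → ℝ be differentiable and let P : ℝ → ℝ³ be differentiable with ‖P(t)‖ = 1 for all t. Then the curve c(t) = e^{h(t)} · P(t) satisfies ‖c'(t)‖² = e^{2 h(t)} · (h'(t)² + ‖P'(t)‖²) for all t. -/

import Mathlib

/-- If `h : ℝ → ℝ` is differentiable and `P : ℝ → ℝ³` is a differentiable curve on the
unit sphere, then the curve `c(t) = e^{h(t)} • P(t)` satisfies
`‖c'(t)‖² = e^{2h(t)} · (h'(t)² + ‖P'(t)‖²)`. -/
theorem norm_deriv_exp_smul_sphere (h : ℝ → ℝ) (P : ℝ → EuclideanSpace ℝ (Fin 3))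
    (hh : Differentiable ℝ h) (hP : Differentiable ℝ P)
    (hPnorm : ∀ t, ‖P t‖ = 1) :
    ∀ t : ℝ, ‖deriv (fun s => Real.exp (h s) • P s) t‖ ^ 2 =
      Real.exp (2 * h t) * ((deriv h t) ^ 2 + ‖deriv P t‖ ^ 2) := by
  intro t
  have hht : HasDerivAt h (deriv h t) t := (hh t).hasDerivAt
  have hPt : HasDerivAt P (deriv P t) t := (hP t).hasDerivAt
  have hexp : HasDerivAt (fun s => Real.exp (h s)) (Real.exp (h t) * deriv h t) t := by
    exact (Real.hasDerivAt_exp (h t)).comp t hht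
  have hc : HasDerivAt (fun s => Real.exp (h s) • P s)
      (Real.exp (h t) • deriv P t + (Real.exp (h t) * deriv h t) • P t) t :=
    hexp.smul hPt
  -- orthogonality: ⟪P t, deriv P t⟫ = 0
  have hip : HasDerivAt (fun s => (inner ℝ (P s) (P s) : ℝ))
      (inner ℝ (P t) (deriv P t) + inner ℝ (deriv P t) (P t)) t := hPt.inner ℝ hPt
  have hconst : (fun s => (inner ℝ (P s) (P s) : ℝ)) = fun _ => (1 : ℝ) := by
    funext s
    rw [real_inner_self_eq_norm_sq, hPnorm s]; norm_num
  have hzero : (inner ℝ (P t) (deriv P t) : ℝ) + inner ℝ (deriv P t) (P t) = 0 := by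
    have := hip.deriv
    rw [hconst] at this
    simpa using this.symm.trans (deriv_const t (1:ℝ))
  have horth : (inner ℝ (P t) (deriv P t) : ℝ) = 0 := by
    have hcomm := real_inner_comm (deriv P t) (P t)
    linarith
  rw [hc.deriv]
  rw [norm_add_sq_real]
  have h1 : ‖Real.exp (h t) • deriv P t‖ = Real.exp (h t) * ‖deriv P t‖ := by
    rw [norm_smul, Real.norm_eq_abs, abs_of_pos (Real.exp_pos _)]
  have h2 : ‖(Real.exp (h t) * deriv h t) • P t‖ = |Real.exp (h t) * deriv h t| := by
    rw [norm_smul, Real.norm_eq_abs, hPnorm, mul_one]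
  have h3 : (inner ℝ (Real.exp (h t) • deriv P t) ((Real.exp (h t) * deriv h t) • P t) : ℝ) = 0 := by
    rw [real_inner_smul_left, real_inner_smul_right, real_inner_comm, horth]
    ring
  rw [h1, h2, h3, sq_abs, mul_pow, mul_pow, show (2:ℝ) * h t = h t + h t from two_mul _, Real.exp_add]
  ring
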